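/- Let {f̂(n)}_{n≥0} ∈ GBV and {f̂(n) + f̂(−n)}_{n≥1} ∈ GBV, and suppose the series f(x) = Σ_{n=−∞}^{∞} f̂(n)e^{inx} converges at every x to a continuous function f ∈ C_{2π}. Then there exists C > 0 such that for all sufficiently large n: sup_{k≥2n+1} k·|f̂(k) + f̂(−k)| ≤ C·( max_{1≤k≤n} k·(|f̂(n+k)| + |f̂(−n−k)|) + Σ_{k=2n+1}^{∞} |f̂(k) + f̂(−k)| ). -/

import Mathlib

open Filter Complex Real
open scoped ENNReal NNReal

noncomputable section

/-- `K(θ) = {z ∈ ℂ : |arg z| ≤ θ}`. -/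
def Kset (θ : ℝ) : Set ℂ := {z : ℂ | |Complex.arg z| ≤ θ}

/-- The class GBV: `c_n ∈ K(θ₁)` for some `θ₁ ∈ [0, π/2)` and all `n ≥ 1`, and
`Σ_{n=m}^{2m} |Δc_n| ≤ M · max_{m ≤ n < m+N₀} |c_n|` for all `m ≥ 1`. -/
def GBV (c : ℕ → ℂ) : Prop :=
  (∃ θ₁ : ℝ, 0 ≤ θ₁ ∧ θ₁ < Real.pi / 2 ∧ ∀ n, 1 ≤ n → c n ∈ Kset θ₁) ∧
  (∃ N₀ : ℕ, 1 ≤ N₀ ∧ ∃ M : ℝ, 0 < M ∧ ∀ m, 1 ≤ m →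
    (∑ n ∈ Finset.Icc m (2 * m), ‖c n - c (n + 1)‖) ≤
      M * ⨆ n ∈ Finset.Ico m (m + N₀), ‖c n‖)

lemma telescope_abs (c : ℕ → ℂ) (a : ℕ) : ∀ b : ℕ, a ≤ b →
    ‖c b - c a‖ ≤ ∑ i ∈ Finset.Ico a b, ‖c i - c (i + 1)‖ := by
  intro b hab
  induction b, hab using Nat.le_induction with
  | base => simp
  | succ b hab ih =>
    rw [Finset.sum_Ico_succ_top hab]
    have h1 : ‖c (b + 1) - c a‖ ≤
        ‖c (b+1) - c b‖ + ‖c b - c a‖ := norm_sub_le_norm_sub_add_norm_sub _ _ _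
    have h2 : ‖c (b+1) - c b‖ = ‖c b - c (b+1)‖ := by
      exact norm_sub_rev _ _
    linarith

lemma window_lemma (c : ℕ → ℂ) (N₀ : ℕ) (hN₀ : 1 ≤ N₀) (M : ℝ) (hM : 0 ≤ M)
    (hGBV : ∀ m, 1 ≤ m →
      (∑ n ∈ Finset.Icc m (2 * m), ‖c n - c (n + 1)‖) ≤
        M * ⨆ n ∈ Finset.Ico m (m + N₀), ‖c n‖)
    (m k : ℕ) (hm : 1 ≤ m) (hk1 : m + N₀ ≤ k + 1) (hk2 : k ≤ 2 * m) :
    ∃ j, m ≤ j ∧ j < m + N₀ ∧ ‖c k‖ ≤ (M + 1) * ‖c j‖ := by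
  have hne : (Finset.Ico m (m + N₀)).Nonempty := by
    rw [Finset.nonempty_Ico]; omega
  obtain ⟨j, hjmem, hjmax⟩ := Finset.exists_max_image _ (fun n => ‖c n‖) hne
  rw [Finset.mem_Ico] at hjmem
  refine ⟨j, hjmem.1, hjmem.2, ?_⟩
  have hsup : (⨆ n ∈ Finset.Ico m (m + N₀), ‖c n‖) ≤ ‖c j‖ := by
    refine Real.iSup_le (fun n => Real.iSup_le (fun hn => hjmax n hn) (norm_nonneg _))
      (norm_nonneg _)
  have hjk : j ≤ k := by omega
  have htel : ‖c k - c j‖ ≤ ∑ i ∈ Finset.Ico j k, ‖c i - c (i + 1)‖ :=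
    telescope_abs c j k hjk
  have hsub : ∑ i ∈ Finset.Ico j k, ‖c i - c (i + 1)‖ ≤
      ∑ i ∈ Finset.Icc m (2 * m), ‖c i - c (i + 1)‖ := by
    refine Finset.sum_le_sum_of_subset_of_nonneg ?_ (fun i _ _ => norm_nonneg _)
    intro i hi
    rw [Finset.mem_Ico] at hi
    rw [Finset.mem_Icc]
    omega
  have h3 : ‖c k - c j‖ ≤ M * ‖c j‖ :=
    le_trans htel (le_trans hsub (le_trans (hGBV m hm) (mul_le_mul_of_nonneg_left hsup hM)))
  have h4 : ‖c k‖ ≤ ‖c j‖ + ‖c k - c j‖ := by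
    have := norm_sub_le_norm_sub_add_norm_sub (c k) (c j) 0
    simpa [add_comm] using this
  nlinarith [norm_nonneg (c j)]

/-- Under the GBV hypotheses with `f ∈ C_{2π}`, for all sufficiently large `n`:
`sup_{k≥2n+1} k|f̂(k)+f̂(−k)| ≤ C·(max_{1≤k≤n} k(|f̂(n+k)|+|f̂(−n−k)|)
 + Σ_{k=2n+1}^∞ |f̂(k)+f̂(−k)|)` (suprema and the tail sum taken in `ℝ≥0∞`). -/
theorem stmt_16 (fhat : ℤ → ℂ) (f : ℝ → ℂ)
    (h1 : GBV (fun n : ℕ => fhat (n : ℤ)))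
    (h2 : GBV (fun n : ℕ => fhat (n : ℤ) + fhat (-(n : ℤ))))
    (hconv : ∀ x : ℝ, Filter.Tendsto
      (fun N : ℕ => ∑ k ∈ Finset.Icc (-(N : ℤ)) (N : ℤ),
        fhat k * Complex.exp ((k : ℂ) * (x : ℂ) * Complex.I))
      Filter.atTop (nhds (f x)))
    (hcont : Continuous f) :
    ∃ C : ℝ≥0, 0 < C ∧ ∀ᶠ n : ℕ in Filter.atTop,
      (⨆ k : ℕ, ⨆ _ : 2 * n + 1 ≤ k, (k : ℝ≥0∞) *
          (‖fhat (k : ℤ) + fhat (-(k : ℤ))‖₊ : ℝ≥0∞))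
      ≤ (C : ℝ≥0∞) *
      ((⨆ k ∈ Finset.Icc 1 n, (k : ℝ≥0∞) *
          ((‖fhat ((n : ℤ) + (k : ℤ))‖₊ : ℝ≥0∞) + (‖fhat (-(n : ℤ) - (k : ℤ))‖₊ : ℝ≥0∞)))
      + (∑' k : ℕ, (‖fhat ((2 * n + 1 + k : ℕ) : ℤ) + fhat (-((2 * n + 1 + k : ℕ) : ℤ))‖₊ : ℝ≥0∞))) := by
  obtain ⟨-, N₀, hN₀, M, hMpos, hGBV⟩ := h2
  set c : ℕ → ℂ := fun x : ℕ => fhat (x : ℤ) + fhat (-(x : ℤ)) with hc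
  set μ : ℝ≥0∞ := ((M + 1).toNNReal : ℝ≥0∞) with hμ
  refine ⟨(24 * N₀ : ℝ≥0) * (M + 1).toNNReal, ?_, ?_⟩
  · apply mul_pos
    · have : (0:ℝ≥0) < (N₀ : ℝ≥0) := by exact_mod_cast hN₀
      positivity
    · exact Real.toNNReal_pos.mpr (by linarith)
  · rw [Filter.eventually_atTop]
    refine ⟨4 * N₀ + 4, fun n hn => ?_⟩
    set A : ℝ≥0∞ := (⨆ k ∈ Finset.Icc 1 n, (k : ℝ≥0∞) *
          ((‖fhat ((n : ℤ) + (k : ℤ))‖₊ : ℝ≥0∞) + (‖fhat (-(n : ℤ) - (k : ℤ))‖₊ : ℝ≥0∞))) with hA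
    set T : ℝ≥0∞ := (∑' k : ℕ,
        (‖fhat ((2 * n + 1 + k : ℕ) : ℤ) + fhat (-((2 * n + 1 + k : ℕ) : ℤ))‖₊ : ℝ≥0∞)) with hT
    have hCcast : ((24 * (N₀:ℝ≥0) * (M + 1).toNNReal : ℝ≥0) : ℝ≥0∞)
        = 24 * (N₀ : ℝ≥0∞) * μ := by
      rw [hμ]; push_cast; ring
    rw [hCcast]
    refine iSup_le fun k => iSup_le fun hk => ?_
    -- per-k bound
    show (k : ℝ≥0∞) * (‖c k‖₊ : ℝ≥0∞) ≤ 24 * (N₀ : ℝ≥0∞) * μ * (A + T)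
    set q : ℕ := k / 4 with hqdef
    set a : ℕ := k - q with hadef
    set L : ℕ := (q + 1) / N₀ with hLdef
    have hq4 : 4 * q ≤ k ∧ k < 4 * q + 4 := by
      constructor
      · rw [hqdef, mul_comm]; exact Nat.div_mul_le_self k 4
      · rw [hqdef]; omega
    have hPL1 : N₀ * L ≤ q + 1 := by rw [hLdef, mul_comm]; exact Nat.div_mul_le_self _ _
    have hPL2 : q + 1 < N₀ * L + N₀ := by
      have h := (Nat.div_add_mod (q + 1) N₀).symm
      calc q + 1 = N₀ * L + (q + 1) % N₀ := h
        _ < N₀ * L + N₀ := Nat.add_lt_add_left (Nat.mod_lt _ (by omega)) _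
    have hq2 : 2 * N₀ + 1 ≤ q := by omega
    have hL1 : 1 ≤ L := by
      rcases Nat.eq_zero_or_pos L with h0 | h; swap; · exact h
      rw [h0, Nat.mul_zero] at hPL2; omega
    have hkP : k ≤ 8 * (N₀ * L) := by
      have hx : N₀ * 1 ≤ N₀ * L := Nat.mul_le_mul_left N₀ hL1
      rw [Nat.mul_one] at hx
      omega
    -- choose the window representatives
    have H : ∀ i : ℕ, ∃ j : ℕ, i < L →
        a + i * N₀ ≤ j ∧ j < a + i * N₀ + N₀ ∧
          ‖c k‖ ≤ (M + 1) * ‖c j‖ := by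
      intro i
      by_cases hi : i < L
      · have hiN : (i + 1) * N₀ ≤ L * N₀ := Nat.mul_le_mul_right N₀ hi
        have hm1 : 1 ≤ a + i * N₀ := by omega
        have hm2 : (a + i * N₀) + N₀ ≤ k + 1 := by
          have : a + (i + 1) * N₀ ≤ a + L * N₀ := Nat.add_le_add_left hiN a
          have hLN : L * N₀ ≤ q + 1 := by rw [mul_comm]; exact hPL1
          have hexp : (i + 1) * N₀ = i * N₀ + N₀ := by ring
          omega
        have hm3 : k ≤ 2 * (a + i * N₀) := by omega
        obtain ⟨j, hj1, hj2, hj3⟩ :=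
          window_lemma c N₀ hN₀ M hMpos.le hGBV (a + i * N₀) k hm1 hm2 hm3
        exact ⟨j, fun _ => ⟨hj1, hj2, hj3⟩⟩
      · exact ⟨0, fun h => absurd h hi⟩
    choose j hj using H
    -- ENNReal version of window bound
    have hG : ∀ i, i < L → (‖c k‖₊ : ℝ≥0∞) ≤ μ * (‖c (j i)‖₊ : ℝ≥0∞) := by
      intro i hi
      have hr := (hj i hi).2.2
      have hr' : ‖c k‖₊ ≤ (M + 1).toNNReal * ‖c (j i)‖₊ := by
        rw [← NNReal.coe_le_coe]
        push_cast
        rw [Real.coe_toNNReal _ (by linarith)]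
        simpa using hr
      rw [hμ, ← ENNReal.coe_mul]
      exact_mod_cast hr'
    -- monotonicity of j across windows
    have hjmono : ∀ i1 i2 : ℕ, i1 < i2 → i2 < L → j i1 < j i2 := by
      intro i1 i2 h12 hi2
      have b1 := (hj i1 (lt_trans h12 hi2)).2.1
      have b2 := (hj i2 hi2).1
      have hmul : (i1 + 1) * N₀ ≤ i2 * N₀ := Nat.mul_le_mul_right N₀ h12
      have : a + i1 * N₀ + N₀ ≤ a + i2 * N₀ := by
        have := Nat.add_le_add_left hmul a
        have hexp : (i1 + 1) * N₀ = i1 * N₀ + N₀ := by ring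
        omega
      omega
    set s₁ : Finset ℕ := (Finset.range L).filter (fun i => j i ≤ 2 * n) with hs₁def
    set s₂ : Finset ℕ := (Finset.range L).filter (fun i => ¬ j i ≤ 2 * n) with hs₂def
    -- master inequality
    have hsum : (L : ℝ≥0∞) * (‖c k‖₊ : ℝ≥0∞) ≤
        μ * ∑ i ∈ Finset.range L, (‖c (j i)‖₊ : ℝ≥0∞) := by
      calc (L : ℝ≥0∞) * (‖c k‖₊ : ℝ≥0∞)
          = ∑ _i ∈ Finset.range L, (‖c k‖₊ : ℝ≥0∞) := by
            rw [Finset.sum_const, Finset.card_range, nsmul_eq_mul]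
        _ ≤ ∑ i ∈ Finset.range L, μ * (‖c (j i)‖₊ : ℝ≥0∞) :=
            Finset.sum_le_sum fun i hi => hG i (Finset.mem_range.mp hi)
        _ = μ * ∑ i ∈ Finset.range L, (‖c (j i)‖₊ : ℝ≥0∞) := by rw [Finset.mul_sum]
    have hsplit : ∑ i ∈ Finset.range L, (‖c (j i)‖₊ : ℝ≥0∞)
        = ∑ i ∈ s₁, (‖c (j i)‖₊ : ℝ≥0∞) + ∑ i ∈ s₂, (‖c (j i)‖₊ : ℝ≥0∞) :=
      (Finset.sum_filter_add_sum_filter_not _ _ _).symm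
    -- tail bound for s₂
    have hs₂T : ∑ i ∈ s₂, (‖c (j i)‖₊ : ℝ≥0∞) ≤ T := by
      set h' : ℕ → ℝ≥0∞ := fun m =>
        (‖fhat ((2 * n + 1 + m : ℕ) : ℤ) + fhat (-((2 * n + 1 + m : ℕ) : ℤ))‖₊ : ℝ≥0∞) with hh'
      have hmem : ∀ i ∈ s₂, 2 * n + 1 ≤ j i ∧ i < L := by
        intro i hi
        rw [hs₂def, Finset.mem_filter, Finset.mem_range] at hi
        exact ⟨by omega, hi.1⟩
      have heq : ∀ i ∈ s₂, (‖c (j i)‖₊ : ℝ≥0∞) = h' (j i - (2 * n + 1)) := by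
        intro i hi
        have h1 := (hmem i hi).1
        have h2 : 2 * n + 1 + (j i - (2 * n + 1)) = j i := by omega
        rw [hh']
        simp only [h2]
        rfl
      rw [Finset.sum_congr rfl heq]
      have hinj : Set.InjOn (fun i => j i - (2 * n + 1)) ↑s₂ := by
        intro i1 hi1 i2 hi2 heq'
        simp only at heq'
        have m1 := hmem i1 hi1
        have m2 := hmem i2 hi2
        have hje : j i1 = j i2 := by omega
        by_contra hne
        rcases Nat.lt_or_ge i1 i2 with hlt | hge
        · exact absurd hje (Nat.ne_of_lt (hjmono i1 i2 hlt m2.2))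
        · have hlt2 : i2 < i1 := by omega
          exact absurd hje.symm (Nat.ne_of_lt (hjmono i2 i1 hlt2 m1.2))
      calc ∑ i ∈ s₂, h' (j i - (2 * n + 1))
          = ∑ y ∈ s₂.image (fun i => j i - (2 * n + 1)), h' y :=
            (Finset.sum_image (fun i hi i2 hi2 h => hinj hi hi2 h)).symm
        _ ≤ T := by rw [hT]; exact ENNReal.sum_le_tsum _
    -- bound for elements of s₁
    have ha3k : 4 * a ≥ 3 * k := by omega
    have hs₁A : ∀ i ∈ s₁, (n : ℝ≥0∞) * (‖c (j i)‖₊ : ℝ≥0∞) ≤ 2 * A := by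
      intro i hi
      rw [hs₁def, Finset.mem_filter, Finset.mem_range] at hi
      obtain ⟨hiL, hji2n⟩ := hi
      have hja : a + i * N₀ ≤ j i := (hj i hiL).1
      set k' : ℕ := j i - n with hk'def
      have hk'1 : 1 ≤ k' := by omega
      have hk'n : k' ≤ n := by omega
      have hnk' : n ≤ 2 * k' := by omega
      have hji : j i = n + k' := by omega
      have hb : ((k' : ℝ≥0∞)) * ((‖fhat ((n : ℤ) + (k' : ℤ))‖₊ : ℝ≥0∞)
          + (‖fhat (-(n : ℤ) - (k' : ℤ))‖₊ : ℝ≥0∞)) ≤ A := by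
        rw [hA]
        exact le_iSup_of_le k' (le_iSup_of_le (Finset.mem_Icc.mpr ⟨hk'1, hk'n⟩) le_rfl)
      have hcast1 : (n : ℤ) + (k' : ℤ) = ((j i : ℕ) : ℤ) := by omega
      have hcast2 : -(n : ℤ) - (k' : ℤ) = -((j i : ℕ) : ℤ) := by omega
      have htri : (‖c (j i)‖₊ : ℝ≥0∞) ≤ (‖fhat ((n : ℤ) + (k' : ℤ))‖₊ : ℝ≥0∞)
          + (‖fhat (-(n : ℤ) - (k' : ℤ))‖₊ : ℝ≥0∞) := by
        rw [hcast1, hcast2]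
        have := nnnorm_add_le (fhat ((j i : ℕ) : ℤ)) (fhat (-((j i : ℕ) : ℤ)))
        exact_mod_cast this
      calc (n : ℝ≥0∞) * (‖c (j i)‖₊ : ℝ≥0∞)
          ≤ ((2 * k' : ℕ) : ℝ≥0∞) * (‖c (j i)‖₊ : ℝ≥0∞) := by
            gcongr
        _ = 2 * ((k' : ℝ≥0∞) * (‖c (j i)‖₊ : ℝ≥0∞)) := by push_cast; ring
        _ ≤ 2 * ((k' : ℝ≥0∞) * ((‖fhat ((n : ℤ) + (k' : ℤ))‖₊ : ℝ≥0∞)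
            + (‖fhat (-(n : ℤ) - (k' : ℤ))‖₊ : ℝ≥0∞))) := by gcongr
        _ ≤ 2 * A := by gcongr
    have hLne : (L : ℝ≥0∞) ≠ 0 := by exact_mod_cast (show L ≠ 0 by omega)
    have hLnetop : (L : ℝ≥0∞) ≠ ⊤ := ENNReal.natCast_ne_top L
    have hN1 : (1 : ℝ≥0∞) ≤ (N₀ : ℝ≥0∞) := by exact_mod_cast hN₀
    have hkcast : (k : ℝ≥0∞) ≤ 8 * (N₀ : ℝ≥0∞) * (L : ℝ≥0∞) := by
      calc (k : ℝ≥0∞) ≤ ((8 * (N₀ * L) : ℕ) : ℝ≥0∞) := by exact_mod_cast hkP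
        _ = 8 * (N₀ : ℝ≥0∞) * L := by push_cast; ring
    by_cases hcase : k ≤ 3 * n
    · -- Case A : k ≤ 3n
      have hncast : (n : ℝ≥0∞) ≤ 8 * (N₀ : ℝ≥0∞) * L :=
        le_trans (by exact_mod_cast (show n ≤ k by omega)) hkcast
      have hcard : (s₁.card : ℝ≥0∞) ≤ (L : ℝ≥0∞) := by
        have : s₁.card ≤ L := by
          rw [hs₁def]
          calc ((Finset.range L).filter _).card ≤ (Finset.range L).card :=
            Finset.card_filter_le _ _
          _ = L := Finset.card_range L
        exact_mod_cast this
      have hmaster : (L : ℝ≥0∞) * ((n : ℝ≥0∞) * (‖c k‖₊ : ℝ≥0∞)) ≤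
          (L : ℝ≥0∞) * (μ * (2 * A + 8 * (N₀ : ℝ≥0∞) * T)) := by
        calc (L : ℝ≥0∞) * ((n : ℝ≥0∞) * (‖c k‖₊ : ℝ≥0∞))
            = (n : ℝ≥0∞) * ((L : ℝ≥0∞) * (‖c k‖₊ : ℝ≥0∞)) := by ring
          _ ≤ (n : ℝ≥0∞) * (μ * (∑ i ∈ s₁, (‖c (j i)‖₊ : ℝ≥0∞)
              + ∑ i ∈ s₂, (‖c (j i)‖₊ : ℝ≥0∞))) := by
              rw [← hsplit]; exact mul_le_mul_right hsum _
          _ = μ * ((∑ i ∈ s₁, (n : ℝ≥0∞) * (‖c (j i)‖₊ : ℝ≥0∞))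
              + (n : ℝ≥0∞) * ∑ i ∈ s₂, (‖c (j i)‖₊ : ℝ≥0∞)) := by
              rw [← Finset.mul_sum]; ring
          _ ≤ μ * (((L : ℝ≥0∞) * (2 * A)) + (8 * (N₀ : ℝ≥0∞) * L) * T) := by
              gcongr
              · calc ∑ i ∈ s₁, (n : ℝ≥0∞) * (‖c (j i)‖₊ : ℝ≥0∞)
                    ≤ ∑ _i ∈ s₁, 2 * A := Finset.sum_le_sum hs₁A
                  _ = (s₁.card : ℝ≥0∞) * (2 * A) := by
                      rw [Finset.sum_const, nsmul_eq_mul]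
                  _ ≤ (L : ℝ≥0∞) * (2 * A) := mul_le_mul_left hcard _
          _ = (L : ℝ≥0∞) * (μ * (2 * A + 8 * (N₀ : ℝ≥0∞) * T)) := by ring
      have hcancel : (n : ℝ≥0∞) * (‖c k‖₊ : ℝ≥0∞) ≤
          μ * (2 * A + 8 * (N₀ : ℝ≥0∞) * T) :=
        (ENNReal.mul_le_mul_iff_right hLne hLnetop).mp hmaster
      calc (k : ℝ≥0∞) * (‖c k‖₊ : ℝ≥0∞)
          ≤ ((3 * n : ℕ) : ℝ≥0∞) * (‖c k‖₊ : ℝ≥0∞) := by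
            gcongr
        _ = 3 * ((n : ℝ≥0∞) * (‖c k‖₊ : ℝ≥0∞)) := by push_cast; ring
        _ ≤ 3 * (μ * (2 * A + 8 * (N₀ : ℝ≥0∞) * T)) := mul_le_mul_right hcancel _
        _ ≤ 3 * (μ * (8 * (N₀ : ℝ≥0∞) * A + 8 * (N₀ : ℝ≥0∞) * T)) := by
            gcongr
            calc (2 : ℝ≥0∞) ≤ 8 * 1 := by norm_num
              _ ≤ 8 * (N₀ : ℝ≥0∞) := mul_le_mul_right hN1 _
        _ = 24 * (N₀ : ℝ≥0∞) * μ * (A + T) := by ring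
    · -- Case B : k > 3n
      have hs₁empty : s₁ = ∅ := by
        rw [hs₁def, Finset.filter_eq_empty_iff]
        intro i hi
        rw [Finset.mem_range] at hi
        have hja : a ≤ j i := le_trans (Nat.le_add_right a (i * N₀)) (hj i hi).1
        omega
      have hLT : (L : ℝ≥0∞) * (‖c k‖₊ : ℝ≥0∞) ≤ μ * T := by
        refine le_trans hsum ?_
        rw [hsplit, hs₁empty]
        simp only [Finset.sum_empty, zero_add]
        exact mul_le_mul_right hs₂T _
      calc (k : ℝ≥0∞) * (‖c k‖₊ : ℝ≥0∞)
          ≤ (8 * (N₀ : ℝ≥0∞) * L) * (‖c k‖₊ : ℝ≥0∞) := mul_le_mul_left hkcast _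
        _ = 8 * (N₀ : ℝ≥0∞) * ((L : ℝ≥0∞) * (‖c k‖₊ : ℝ≥0∞)) := by ring
        _ ≤ 8 * (N₀ : ℝ≥0∞) * (μ * T) := mul_le_mul_right hLT _
        _ = 8 * (N₀ : ℝ≥0∞) * μ * T := by ring
        _ ≤ 24 * (N₀ : ℝ≥0∞) * μ * (A + T) := by
            apply mul_le_mul'
            · apply mul_le_mul_left
              apply mul_le_mul_left
              norm_num
            · exact le_add_self
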